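/- arXiv:1907.12116 — 3 statements merged into one kernel-verified Lean document; each statement's English description precedes it below -/
import Mathlib

section
/- Let g_n : ℝ^D → ℝ^D for n = 0,…,N, let G(θ, w) := (1/N)(g₀(θ) + Σ_{n=1}^N w_n g_n(θ)), and let θ̂(w) solve G(θ̂(w), w) = 0 with θ̂ := θ̂(1_N). Suppose each g_n is C¹ on a convex open set Ω_θ containing θ̂(w̃) and θ̂, that the Jacobian H(θ, 1_N) := ∂G(θ,1_N)/∂θ satisfies sup_{θ∈Ω_θ} ‖H(θ,1_N)⁻¹‖_op ≤ C_op, and that sup_{θ∈Ω_θ} ‖G(θ, w̃) − G(θ, 1_N)‖₂ ≤ δ₀. Then ‖θ̂(w̃) − θ̂‖₂ ≤ C_op · δ₀. -/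
open scoped BigOperators RealInnerProductSpace

/-- Theta difference bound: with `G(θ,w) = (1/N)(g₀(θ) + ∑ₙ wₙ gₙ(θ))`, `θ̂(wt)` a zero of
`G(·,wt)` and `θ̂` a zero of `G(·,1_N)`, both lying in a convex open set `Ω` on which the `gₙ`
are `C¹`, if the Jacobian `H(θ,1_N)` is strongly positive definite with constant `1/C_op`
(so that `‖H(θ,1_N)⁻¹‖_op ≤ C_op`) on `Ω` and `‖G(θ,wt) - G(θ,1_N)‖₂ ≤ δ₀` on `Ω`, then
`‖θ̂(wt) - θ̂‖₂ ≤ C_op δ₀`. -/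
theorem stmt7 {D N : ℕ}
    (g₀ : EuclideanSpace ℝ (Fin D) → EuclideanSpace ℝ (Fin D))
    (g : Fin N → EuclideanSpace ℝ (Fin D) → EuclideanSpace ℝ (Fin D))
    (Ω : Set (EuclideanSpace ℝ (Fin D))) (hΩo : IsOpen Ω) (hΩc : Convex ℝ Ω)
    (wt : Fin N → ℝ) (θt θh : EuclideanSpace ℝ (Fin D)) (hθt : θt ∈ Ω) (hθh : θh ∈ Ω)
    (G : (Fin N → ℝ) → EuclideanSpace ℝ (Fin D) → EuclideanSpace ℝ (Fin D))
    (hGdef : G = fun w θ => (N : ℝ)⁻¹ • (g₀ θ + ∑ n, w n • g n θ))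
    (hg₀ : ContDiffOn ℝ 1 g₀ Ω) (hg : ∀ n, ContDiffOn ℝ 1 (g n) Ω)
    (hroot : G wt θt = 0) (hroot1 : G (fun _ => 1) θh = 0)
    (Cop δ₀ : ℝ) (hCop : 0 < Cop)
    (hH : ∀ θ ∈ Ω, ∀ v : EuclideanSpace ℝ (Fin D),
      ‖v‖ ^ 2 / Cop ≤ ⟪v, fderiv ℝ (G (fun _ => 1)) θ v⟫)
    (hδ : ∀ θ ∈ Ω, ‖G wt θ - G (fun _ => 1) θ‖ ≤ δ₀) :
    ‖θt - θh‖ ≤ Cop * δ₀ := by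
  set F := G (fun _ => 1) with hF
  -- F is C¹ on Ω
  have hFcd : ContDiffOn ℝ 1 F Ω := by
    have : F = fun θ => (N : ℝ)⁻¹ • (g₀ θ + ∑ n, g n θ) := by
      simp [hF, hGdef]
    rw [this]
    exact ((hg₀.add (ContDiffOn.sum fun n _ => hg n)).const_smul _)
  have hFdiff : ∀ θ ∈ Ω, DifferentiableAt ℝ F θ := fun θ hθ =>
    ((hFcd.differentiableOn one_ne_zero) θ hθ).differentiableAt (hΩo.mem_nhds hθ)
  set v := θt - θh with hv
  set γ : ℝ → EuclideanSpace ℝ (Fin D) := fun t => θh + t • v with hγ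
  have hγmem : ∀ t ∈ Set.Icc (0:ℝ) 1, γ t ∈ Ω := fun t ht =>
    hΩc.add_smul_sub_mem hθh hθt ht
  have hderiv : ∀ t ∈ Set.Icc (0:ℝ) 1,
      HasDerivAt (fun s => ⟪v, F (γ s)⟫) ⟪v, fderiv ℝ F (γ t) v⟫ t := by
    intro t ht
    have hγd : HasDerivAt γ v t := by
      have := ((hasDerivAt_id t).smul_const v).const_add θh
      simpa [hγ] using this
    have hFd : HasDerivAt (fun s => F (γ s)) (fderiv ℝ F (γ t) v) t :=
      (hFdiff _ (hγmem t ht)).hasFDerivAt.comp_hasDerivAt t hγd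
    have := (hasDerivAt_const t v).inner ℝ hFd
    simpa using this
  -- MVT
  obtain ⟨c, hc, hceq⟩ := exists_hasDerivAt_eq_slope (fun s => ⟪v, F (γ s)⟫)
      (fun t => ⟪v, fderiv ℝ F (γ t) v⟫) one_pos
      (fun t ht => (hderiv t ht).continuousAt.continuousWithinAt)
      (fun t ht => hderiv t (Set.mem_Icc_of_Ioo ht))
  have hγ0 : γ 0 = θh := by simp [hγ]
  have hγ1 : γ 1 = θt := by simp [hγ, hv]
  have hFθh : F θh = 0 := hroot1
  have hFθt : ‖F θt‖ ≤ δ₀ := by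
    have := hδ θt hθt
    rwa [hroot, zero_sub, norm_neg] at this
  have hδ₀ : 0 ≤ δ₀ := le_trans (norm_nonneg _) hFθt
  have hslope : ⟪v, fderiv ℝ F (γ c) v⟫ = ⟪v, F θt⟫ := by
    rw [hceq, hγ1, hγ0, hFθh]
    simp
  have hlow : ‖v‖ ^ 2 / Cop ≤ ⟪v, F θt⟫ := by
    rw [← hslope]
    exact hH _ (hγmem c (Set.mem_Icc_of_Ioo hc)) v
  have hup : ⟪v, F θt⟫ ≤ ‖v‖ * δ₀ :=
    le_trans (real_inner_le_norm _ _) (mul_le_mul_of_nonneg_left hFθt (norm_nonneg v))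
  have key : ‖v‖ ^ 2 / Cop ≤ ‖v‖ * δ₀ := le_trans hlow hup
  rcases eq_or_lt_of_le (norm_nonneg v) with h0 | h0
  · rw [← h0]; positivity
  · have : ‖v‖ ^ 2 ≤ ‖v‖ * δ₀ * Cop := (div_le_iff₀ hCop).mp key
    have h2 : ‖v‖ * ‖v‖ ≤ ‖v‖ * (Cop * δ₀) := by nlinarith
    exact le_of_mul_le_mul_left h2 h0
end

section
/- Suppose sup_{θ∈Ω_θ} ‖H(θ,1_N)⁻¹‖_op ≤ C_op, sup over θ ∈ Ω_θ and admissible weights w̃ of ‖H(θ,w̃) − H(θ,1_N)‖₂ is at most δ₁, the Jacobian is M₃-Lipschitz in θ (Frobenius norm), and ‖θ̂(w̃) − θ̂‖₂ ≤ C_op δ₀ for all admissible w̃. If C_op δ₁ + C_op² M₃ δ₀ ≤ δ̊ for some δ̊ ∈ (0,1), then sup over admissible w̃ of ‖H(θ̂(w̃), w̃)⁻¹‖_op ≤ C_op / (1 − δ̊). -/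
open scoped BigOperators

/-- Frobenius norm of a continuous linear map on Euclidean space, via the standard basis. -/
noncomputable def frobCLM {D : ℕ}
    (T : EuclideanSpace ℝ (Fin D) →L[ℝ] EuclideanSpace ℝ (Fin D)) : ℝ :=
  Real.sqrt (∑ i, ∑ j, (T (EuclideanSpace.single j (1:ℝ)) i) ^ 2)

lemma opNorm_le_frobCLM {D : ℕ}
    (T : EuclideanSpace ℝ (Fin D) →L[ℝ] EuclideanSpace ℝ (Fin D)) : ‖T‖ ≤ frobCLM T := by
  refine T.opNorm_le_bound (Real.sqrt_nonneg _) (fun x => ?_)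
  have hx : x = ∑ j, (x j) • EuclideanSpace.single j (1:ℝ) := by
    ext i
    rw [WithLp.ofLp_sum, Finset.sum_apply]
    simp [EuclideanSpace.single_apply, mul_comm]
  have hTx : ∀ i, T x i = ∑ j, x j * T (EuclideanSpace.single j (1:ℝ)) i := by
    intro i
    conv_lhs => rw [hx]
    rw [map_sum, WithLp.ofLp_sum, Finset.sum_apply]
    simp
  have hnorm : ‖T x‖ = Real.sqrt (∑ i, (T x i) ^ 2) := by
    rw [EuclideanSpace.norm_eq]
    congr 1
    refine Finset.sum_congr rfl fun i _ => ?_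
    rw [Real.norm_eq_abs, sq_abs]
  have hxnorm : ‖x‖ = Real.sqrt (∑ j, (x j) ^ 2) := by
    rw [EuclideanSpace.norm_eq]
    congr 1
    refine Finset.sum_congr rfl fun i _ => ?_
    rw [Real.norm_eq_abs, sq_abs]
  rw [hnorm, hxnorm, frobCLM, ← Real.sqrt_mul (by positivity)]
  refine Real.sqrt_le_sqrt ?_
  calc ∑ i, (T x i) ^ 2
      ≤ ∑ i, (∑ j, (x j)^2) * (∑ j, (T (EuclideanSpace.single j (1:ℝ)) i) ^ 2) := by
        refine Finset.sum_le_sum fun i _ => ?_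
        rw [hTx i]
        exact Finset.sum_mul_sq_le_sq_mul_sq _ _ _
    _ = (∑ i, ∑ j, (T (EuclideanSpace.single j (1:ℝ)) i) ^ 2) * ∑ j, (x j)^2 := by
        rw [← Finset.mul_sum, mul_comm]

/-- Invertibility and operator-norm bound for the reweighted Jacobian: with
`G(θ,w) = (1/N)(g₀(θ) + ∑ₙ wₙ gₙ(θ))`, `H(θ,w)` its Jacobian in `θ`, `θ̂(w̃)` zeros of
`G(·,w̃)` lying in the convex open set `Ω`: if `‖H(θ,1_N)⁻¹‖_op ≤ C_op` on `Ω`,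
`‖H(θ,w̃) − H(θ,1_N)‖₂ ≤ δ₁` (Frobenius) for `θ ∈ Ω` and admissible `w̃`, `H(·,1_N)` is
`M₃`-Lipschitz on `Ω` (Frobenius norm), `‖θ̂(w̃) − θ̂(1_N)‖₂ ≤ C_op δ₀`, and
`C_op δ₁ + C_op² M₃ δ₀ ≤ δ̊` for some `δ̊ ∈ (0,1)`, then for every admissible `w̃` the matrix
`H(θ̂(w̃), w̃)` is invertible with `‖H(θ̂(w̃),w̃)⁻¹‖_op ≤ C_op / (1 − δ̊)`. -/
theorem stmt9 {D N : ℕ}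
    (g₀ : EuclideanSpace ℝ (Fin D) → EuclideanSpace ℝ (Fin D))
    (g : Fin N → EuclideanSpace ℝ (Fin D) → EuclideanSpace ℝ (Fin D))
    (Ω : Set (EuclideanSpace ℝ (Fin D))) (hΩo : IsOpen Ω) (hΩc : Convex ℝ Ω)
    (G : (Fin N → ℝ) → EuclideanSpace ℝ (Fin D) → EuclideanSpace ℝ (Fin D))
    (hGdef : G = fun w θ => (N : ℝ)⁻¹ • (g₀ θ + ∑ n, w n • g n θ))
    (hg₀ : ContDiffOn ℝ 1 g₀ Ω) (hg : ∀ n, ContDiffOn ℝ 1 (g n) Ω)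
    (H : (Fin N → ℝ) → EuclideanSpace ℝ (Fin D) →
      (EuclideanSpace ℝ (Fin D) →L[ℝ] EuclideanSpace ℝ (Fin D)))
    (hHdef : H = fun w θ => fderiv ℝ (G w) θ)
    (Wset : Set (Fin N → ℝ))
    (θhat : (Fin N → ℝ) → EuclideanSpace ℝ (Fin D))
    (hmem : ∀ wt ∈ Wset, θhat wt ∈ Ω) (hone : θhat (fun _ => 1) ∈ Ω)
    (hroot : ∀ wt ∈ Wset, G wt (θhat wt) = 0)
    (hroot1 : G (fun _ => 1) (θhat (fun _ => 1)) = 0)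
    (Cop δ₀ δ₁ M₃ δb : ℝ) (hδ₀ : 0 ≤ δ₀) (hM₃ : 0 ≤ M₃)
    (hinv : ∀ θ ∈ Ω, ∃ B : EuclideanSpace ℝ (Fin D) →L[ℝ] EuclideanSpace ℝ (Fin D),
      B.comp (H (fun _ => 1) θ) = ContinuousLinearMap.id ℝ _ ∧
      (H (fun _ => 1) θ).comp B = ContinuousLinearMap.id ℝ _ ∧ ‖B‖ ≤ Cop)
    (hδ₁ : ∀ wt ∈ Wset, ∀ θ ∈ Ω, frobCLM (H wt θ - H (fun _ => 1) θ) ≤ δ₁)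
    (hLip : ∀ θ ∈ Ω, ∀ θ' ∈ Ω,
      frobCLM (H (fun _ => 1) θ - H (fun _ => 1) θ') ≤ M₃ * ‖θ - θ'‖)
    (hdist : ∀ wt ∈ Wset, ‖θhat wt - θhat (fun _ => 1)‖ ≤ Cop * δ₀)
    (hδb : Cop * δ₁ + Cop ^ 2 * M₃ * δ₀ ≤ δb) (hδb0 : 0 < δb) (hδb1 : δb < 1) :
    ∀ wt ∈ Wset, ∃ B : EuclideanSpace ℝ (Fin D) →L[ℝ] EuclideanSpace ℝ (Fin D),
      B.comp (H wt (θhat wt)) = ContinuousLinearMap.id ℝ _ ∧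
      (H wt (θhat wt)).comp B = ContinuousLinearMap.id ℝ _ ∧
      ‖B‖ ≤ Cop / (1 - δb) := by
  intro wt hwt
  obtain ⟨B, hBA, hAB, hBnorm⟩ := hinv (θhat wt) (hmem wt hwt)
  set A : EuclideanSpace ℝ (Fin D) →L[ℝ] EuclideanSpace ℝ (Fin D) :=
    H (fun _ => 1) (θhat wt) with hA
  set A' : EuclideanSpace ℝ (Fin D) →L[ℝ] EuclideanSpace ℝ (Fin D) :=
    H wt (θhat wt) with hA'
  have hCop : 0 ≤ Cop := le_trans (norm_nonneg B) hBnorm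
  have hδ₁0 : 0 ≤ δ₁ :=
    le_trans (Real.sqrt_nonneg _) (hδ₁ wt hwt (θhat wt) (hmem wt hwt))
  have hE : ‖A' - A‖ ≤ δ₁ :=
    le_trans (opNorm_le_frobCLM _) (hδ₁ wt hwt (θhat wt) (hmem wt hwt))
  -- the key perturbation element
  set t : EuclideanSpace ℝ (Fin D) →L[ℝ] EuclideanSpace ℝ (Fin D) := 1 - B * A' with ht
  have htval : t = B * (A - A') := by
    have h1 : B * A = 1 := hBA
    rw [ht, mul_sub, h1]
  have htnorm : ‖t‖ ≤ δb := by
    calc ‖t‖ = ‖B * (A - A')‖ := by rw [htval]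
      _ ≤ ‖B‖ * ‖A - A'‖ := norm_mul_le _ _
      _ ≤ Cop * δ₁ := by
          have := norm_sub_rev A A' ▸ hE
          exact mul_le_mul hBnorm this (norm_nonneg _) hCop
      _ ≤ δb := by
          have : 0 ≤ Cop ^ 2 * M₃ * δ₀ := by positivity
          linarith
  have htlt : ‖t‖ < 1 := lt_of_le_of_lt htnorm hδb1
  -- units
  set u : (EuclideanSpace ℝ (Fin D) →L[ℝ] EuclideanSpace ℝ (Fin D))ˣ :=
    Units.oneSub t htlt with hu
  set uA : (EuclideanSpace ℝ (Fin D) →L[ℝ] EuclideanSpace ℝ (Fin D))ˣ :=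
    ⟨A, B, hAB, hBA⟩ with huA
  have huval : (u : EuclideanSpace ℝ (Fin D) →L[ℝ] EuclideanSpace ℝ (Fin D)) = B * A' := by
    rw [hu, Units.val_oneSub, ht, sub_sub_cancel]
  have hwval : ((uA * u : _ˣ) : EuclideanSpace ℝ (Fin D) →L[ℝ] EuclideanSpace ℝ (Fin D)) = A' := by
    rw [Units.val_mul, huval]
    show A * (B * A') = A'
    rw [← mul_assoc]
    have h2 : A * B = 1 := hAB
    rw [h2, one_mul]
  refine ⟨((uA * u)⁻¹ : _ˣ), ?_, ?_, ?_⟩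
  · show (((uA * u)⁻¹ : _ˣ) : _) * A' = 1
    rw [← hwval, Units.inv_mul]
  · show A' * (((uA * u)⁻¹ : _ˣ) : _) = 1
    rw [← hwval, Units.mul_inv]
  · have hinvval : (((uA * u)⁻¹ : _ˣ) :
        EuclideanSpace ℝ (Fin D) →L[ℝ] EuclideanSpace ℝ (Fin D)) = ↑u⁻¹ * B := by
      rw [mul_inv_rev]
      rfl
    have huinv : ‖(↑u⁻¹ : EuclideanSpace ℝ (Fin D) →L[ℝ] EuclideanSpace ℝ (Fin D))‖ ≤
        (1 - ‖t‖)⁻¹ := by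
      have : (↑u⁻¹ : EuclideanSpace ℝ (Fin D) →L[ℝ] EuclideanSpace ℝ (Fin D)) =
          ∑' n : ℕ, t ^ n := rfl
      rw [this]
      have h1 : ‖(1 : EuclideanSpace ℝ (Fin D) →L[ℝ] EuclideanSpace ℝ (Fin D))‖ ≤ 1 :=
        ContinuousLinearMap.norm_id_le
      have := tsum_geometric_le_of_norm_lt_one t htlt
      linarith
    rw [hinvval]
    have h1t : 0 < 1 - δb := by linarith
    have h2t : 1 - δb ≤ 1 - ‖t‖ := by linarith
    calc ‖(↑u⁻¹ : EuclideanSpace ℝ (Fin D) →L[ℝ] EuclideanSpace ℝ (Fin D)) * B‖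
        ≤ ‖(↑u⁻¹ : EuclideanSpace ℝ (Fin D) →L[ℝ] EuclideanSpace ℝ (Fin D))‖ * ‖B‖ :=
          norm_mul_le _ _
      _ ≤ (1 - ‖t‖)⁻¹ * Cop := by
          refine mul_le_mul huinv hBnorm (norm_nonneg _) ?_
          exact inv_nonneg.mpr (by linarith)
      _ ≤ (1 - δb)⁻¹ * Cop := by gcongr
      _ = Cop / (1 - δb) := by rw [inv_mul_eq_div]
end

section
/- Bound on the second implicit directional derivative: with the notation above, assuming ‖dθ̂(w̃)[Δw]‖₂ ≤ C̃_op δ₀, ‖G₂(θ,1_N)‖₂ ≤ M₂, ‖G₂(θ,w̃) − G₂(θ,1_N)‖₂ ≤ δ₂, ‖H(θ,w̃) − H(θ,1_N)‖₂ ≤ δ₁ for all θ ∈ Ω_θ, and ‖H(θ̂(w̃),w̃)⁻¹‖_op ≤ C̃_op, we have ‖d²θ̂(w̃)[Δw,Δw]‖₂ ≤ C̃_op³ M₂ δ₀² + 2 C̃_op² δ₁ δ₀ + C̃_op³ δ₂ δ₀². -/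
open scoped BigOperators

lemma eucl_sum_apply {D : ℕ} {ι : Type*} (s : Finset ι)
    (f : ι → EuclideanSpace ℝ (Fin D)) (i : Fin D) :
    (∑ j ∈ s, f j) i = ∑ j ∈ s, f j i := by
  induction s using Finset.cons_induction with
  | empty => rfl
  | cons a s ha ih => rw [Finset.sum_cons, Finset.sum_cons, PiLp.add_apply, ih]

lemma eucl_decomp {D : ℕ} (x : EuclideanSpace ℝ (Fin D)) :
    x = ∑ j, x j • EuclideanSpace.single j (1:ℝ) := by
  ext i
  rw [eucl_sum_apply]
  simp [EuclideanSpace.single_apply]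

lemma eucl_norm_eq {D : ℕ} (x : EuclideanSpace ℝ (Fin D)) :
    ‖x‖ = Real.sqrt (∑ j, (x j)^2) := by
  rw [EuclideanSpace.norm_eq]
  congr 1
  simp [Real.norm_eq_abs, sq_abs]

lemma eucl_norm_eq' {ι : Type*} [Fintype ι] (x : EuclideanSpace ℝ ι) :
    ‖x‖ = Real.sqrt (∑ j, (x j)^2) := by
  rw [EuclideanSpace.norm_eq]
  congr 1
  simp [Real.norm_eq_abs, sq_abs]

lemma key_cs {D : ℕ} {ι : Type*} [Fintype ι] (y : EuclideanSpace ℝ (Fin D))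
    (A : Fin D → ι → ℝ) (x : ι → ℝ)
    (hy : ∀ i, y i = ∑ j, x j * A i j) :
    ‖y‖ ≤ Real.sqrt (∑ i, ∑ j, (A i j)^2) * Real.sqrt (∑ j, (x j)^2) := by
  have h1 : ‖y‖^2 ≤ (∑ i, ∑ j, (A i j)^2) * (∑ j, (x j)^2) := by
    rw [EuclideanSpace.norm_eq, Real.sq_sqrt (by positivity)]
    have hb : ∀ i, ‖y i‖^2 ≤ (∑ j, (x j)^2) * (∑ j, (A i j)^2) := by
      intro i
      rw [Real.norm_eq_abs, sq_abs, hy i]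
      exact Finset.sum_mul_sq_le_sq_mul_sq _ _ _
    calc ∑ i, ‖y i‖^2 ≤ ∑ i, (∑ j, (x j)^2) * (∑ j, (A i j)^2) :=
          Finset.sum_le_sum fun i _ => hb i
      _ = (∑ i, ∑ j, (A i j)^2) * (∑ j, (x j)^2) := by
          rw [← Finset.mul_sum, mul_comm]
  have h2 := Real.sqrt_le_sqrt h1
  rwa [Real.sqrt_sq (norm_nonneg _), Real.sqrt_mul (by positivity)] at h2

lemma clm_apply_le_frob {D : ℕ}
    (T : EuclideanSpace ℝ (Fin D) →L[ℝ] EuclideanSpace ℝ (Fin D))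
    (x : EuclideanSpace ℝ (Fin D)) :
    ‖T x‖ ≤ frobCLM T * ‖x‖ := by
  have hy : ∀ i, (T x) i = ∑ j, x j * (T (EuclideanSpace.single j (1:ℝ))) i := by
    intro i
    conv_lhs => rw [eucl_decomp x]
    rw [map_sum, eucl_sum_apply]
    simp [smul_eq_mul]
  have := key_cs (T x) (fun i j => T (EuclideanSpace.single j (1:ℝ)) i) (fun j => x j) hy
  rw [← eucl_norm_eq] at this
  exact this

lemma bilin_apply_le_frob {D : ℕ}
    (T : EuclideanSpace ℝ (Fin D) →L[ℝ] (EuclideanSpace ℝ (Fin D) →L[ℝ] EuclideanSpace ℝ (Fin D)))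
    (u v : EuclideanSpace ℝ (Fin D)) :
    ‖(T u) v‖ ≤ Real.sqrt (∑ i, ∑ j, ∑ l,
        ((T (EuclideanSpace.single l (1:ℝ))) (EuclideanSpace.single j (1:ℝ)) i) ^ 2)
      * (‖v‖ * ‖u‖) := by
  have hy : ∀ i, ((T u) v) i = ∑ p : Fin D × Fin D, (v p.1 * u p.2) *
      ((T (EuclideanSpace.single p.2 (1:ℝ))) (EuclideanSpace.single p.1 (1:ℝ)) i) := by
    intro i
    rw [Fintype.sum_prod_type]
    have h1 : (T u) v = ∑ l, u l • (T (EuclideanSpace.single l (1:ℝ))) v := by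
      conv_lhs => rw [eucl_decomp u, map_sum]
      rw [ContinuousLinearMap.sum_apply]
      congr 1
      ext l
      rw [map_smul, ContinuousLinearMap.smul_apply]
    rw [h1, eucl_sum_apply, Finset.sum_comm]
    congr 1
    ext l
    rw [PiLp.smul_apply, smul_eq_mul]
    have h2 : ∀ i, ((T (EuclideanSpace.single l (1:ℝ))) v) i
        = ∑ j, v j * ((T (EuclideanSpace.single l (1:ℝ))) (EuclideanSpace.single j (1:ℝ))) i := by
      intro i
      conv_lhs => rw [eucl_decomp v]
      rw [map_sum, eucl_sum_apply]
      simp [smul_eq_mul]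
    rw [h2 i, Finset.mul_sum]
    congr 1
    ext j
    ring
  have hkey : ‖(T u) v‖ ≤ Real.sqrt (∑ i, ∑ p : Fin D × Fin D,
      ((T (EuclideanSpace.single p.2 (1:ℝ))) (EuclideanSpace.single p.1 (1:ℝ)) i) ^ 2)
      * Real.sqrt (∑ p : Fin D × Fin D, (v p.1 * u p.2) ^ 2) :=
    key_cs ((T u) v)
      (fun i (p : Fin D × Fin D) => (T (EuclideanSpace.single p.2 (1:ℝ)))
        (EuclideanSpace.single p.1 (1:ℝ)) i)
      (fun p => v p.1 * u p.2) hy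
  have e1 : (∑ i, ∑ p : Fin D × Fin D, ((T (EuclideanSpace.single p.2 (1:ℝ)))
      (EuclideanSpace.single p.1 (1:ℝ)) i)^2)
      = ∑ i, ∑ j, ∑ l, ((T (EuclideanSpace.single l (1:ℝ)))
          (EuclideanSpace.single j (1:ℝ)) i) ^ 2 :=
    Finset.sum_congr rfl fun i _ => by rw [Fintype.sum_prod_type]
  have e2 : (∑ p : Fin D × Fin D, (v p.1 * u p.2)^2) = (∑ j, (v j)^2) * (∑ l, (u l)^2) := by
    rw [Fintype.sum_prod_type]
    simp_rw [mul_pow, ← Finset.mul_sum]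
    rw [← Finset.sum_mul]
  rw [e1, e2, Real.sqrt_mul (by positivity), ← eucl_norm_eq, ← eucl_norm_eq] at hkey
  exact hkey

lemma tri3 {D : ℕ} (a b : Fin D → Fin D → Fin D → ℝ) :
    Real.sqrt (∑ i, ∑ j, ∑ l, (a i j l)^2)
      ≤ Real.sqrt (∑ i, ∑ j, ∑ l, (a i j l - b i j l)^2)
        + Real.sqrt (∑ i, ∑ j, ∑ l, (b i j l)^2) := by
  set x : EuclideanSpace ℝ (Fin D × Fin D × Fin D) :=
    WithLp.toLp 2 (fun p : Fin D × Fin D × Fin D => a p.1 p.2.1 p.2.2) with hx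
  set y : EuclideanSpace ℝ (Fin D × Fin D × Fin D) :=
    WithLp.toLp 2 (fun p : Fin D × Fin D × Fin D => b p.1 p.2.1 p.2.2) with hy
  have h1 : Real.sqrt (∑ i, ∑ j, ∑ l, (a i j l)^2) = ‖x‖ := by
    rw [eucl_norm_eq']
    congr 1
    rw [Fintype.sum_prod_type]
    exact Finset.sum_congr rfl fun i _ => by rw [Fintype.sum_prod_type]
  have h2 : Real.sqrt (∑ i, ∑ j, ∑ l, (b i j l)^2) = ‖y‖ := by
    rw [eucl_norm_eq']
    congr 1
    rw [Fintype.sum_prod_type]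
    exact Finset.sum_congr rfl fun i _ => by rw [Fintype.sum_prod_type]
  have h3 : Real.sqrt (∑ i, ∑ j, ∑ l, (a i j l - b i j l)^2) = ‖x - y‖ := by
    rw [eucl_norm_eq']
    congr 1
    rw [Fintype.sum_prod_type]
    refine Finset.sum_congr rfl fun i _ => by
      rw [Fintype.sum_prod_type]
      exact Finset.sum_congr rfl fun j _ => Finset.sum_congr rfl fun l _ => by
        simp [hx, hy]
  rw [h1, h2, h3]
  calc ‖x‖ = ‖(x - y) + y‖ := by rw [sub_add_cancel]
    _ ≤ ‖x - y‖ + ‖y‖ := norm_add_le _ _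

set_option maxHeartbeats 1000000 in
/-- Bound on the second implicit directional derivative: with
`G(θ,w) = (1/N)(g₀(θ) + ∑ₙ wₙ gₙ(θ))`, `θ̂` the implicit solution with `G(θ̂(w'),w') = 0`
near `w̃`, `H(θ,w)` the `θ`-Jacobian and `G₂(θ,w)` the second `θ`-derivative:
assuming `‖H(θ̂(w̃),w̃)⁻¹‖_op ≤ C̃_op`, `‖dθ̂(w̃)[Δw]‖₂ ≤ C̃_op δ₀`,
`‖G₂(θ̂(w̃),1_N)‖₂ ≤ M₂`, `‖G₂(θ̂(w̃),w̃) − G₂(θ̂(w̃),1_N)‖₂ ≤ δ₂`, and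
`‖H(θ̂(w̃),w) − H(θ̂(w̃),1_N)‖₂ ≤ δ₁` (Frobenius norms), we have
`‖d²θ̂(w̃)[Δw,Δw]‖₂ ≤ C̃_op³ M₂ δ₀² + 2 C̃_op² δ₁ δ₀ + C̃_op³ δ₂ δ₀²`. -/
theorem stmt15 {D N : ℕ}
    (g₀ : EuclideanSpace ℝ (Fin D) → EuclideanSpace ℝ (Fin D))
    (g : Fin N → EuclideanSpace ℝ (Fin D) → EuclideanSpace ℝ (Fin D))
    (Ω : Set (EuclideanSpace ℝ (Fin D))) (hΩo : IsOpen Ω)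
    (G : (Fin N → ℝ) → EuclideanSpace ℝ (Fin D) → EuclideanSpace ℝ (Fin D))
    (hGdef : G = fun w θ => (N : ℝ)⁻¹ • (g₀ θ + ∑ n, w n • g n θ))
    (hg₀ : ContDiffOn ℝ 2 g₀ Ω) (hg : ∀ n, ContDiffOn ℝ 2 (g n) Ω)
    (wt w : Fin N → ℝ)
    (θhat : (Fin N → ℝ) → EuclideanSpace ℝ (Fin D))
    (hmem : θhat wt ∈ Ω)
    (hθ : ContDiffAt ℝ 2 θhat wt)
    (hroot : ∀ᶠ w' in nhds wt, G w' (θhat w') = 0)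
    (Ctop δ₀ δ₁ δ₂ M₂ : ℝ)
    (hinv : ∃ B : EuclideanSpace ℝ (Fin D) →L[ℝ] EuclideanSpace ℝ (Fin D),
      B.comp (fderiv ℝ (G wt) (θhat wt)) = ContinuousLinearMap.id ℝ _ ∧
      (fderiv ℝ (G wt) (θhat wt)).comp B = ContinuousLinearMap.id ℝ _ ∧ ‖B‖ ≤ Ctop)
    (hdθ : ‖fderiv ℝ θhat wt (w - fun _ => 1)‖ ≤ Ctop * δ₀)
    (hM₂ : Real.sqrt (∑ i, ∑ j, ∑ l,
      (fderiv ℝ (fun θ' => fderiv ℝ (G (fun _ => 1)) θ'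
          (EuclideanSpace.single j (1:ℝ))) (θhat wt) (EuclideanSpace.single l (1:ℝ)) i) ^ 2)
        ≤ M₂)
    (hδ₂ : Real.sqrt (∑ i, ∑ j, ∑ l,
      ((fderiv ℝ (fun θ' => fderiv ℝ (G wt) θ'
            (EuclideanSpace.single j (1:ℝ))) (θhat wt) (EuclideanSpace.single l (1:ℝ))
        - fderiv ℝ (fun θ' => fderiv ℝ (G (fun _ => 1)) θ'
            (EuclideanSpace.single j (1:ℝ))) (θhat wt) (EuclideanSpace.single l (1:ℝ))) i) ^ 2)
        ≤ δ₂)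
    (hδ₁ : frobCLM (fderiv ℝ (G w) (θhat wt) - fderiv ℝ (G (fun _ => 1)) (θhat wt)) ≤ δ₁) :
    ‖fderiv ℝ (fun w' => fderiv ℝ θhat w' (w - fun _ => 1)) wt (w - fun _ => 1)‖
      ≤ Ctop ^ 3 * M₂ * δ₀ ^ 2 + 2 * Ctop ^ 2 * δ₁ * δ₀ + Ctop ^ 3 * δ₂ * δ₀ ^ 2 := by
  obtain ⟨B, hB1, hB2, hBle⟩ := hinv
  have hC0 : 0 ≤ Ctop := le_trans (norm_nonneg B) hBle
  set Δ : Fin N → ℝ := w - (fun _ => 1) with hΔ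
  set θ₀ : EuclideanSpace ℝ (Fin D) := θhat wt with hθ₀
  -- smoothness of G w' on Ω
  have hGC2 : ∀ w' : Fin N → ℝ, ContDiffOn ℝ 2 (G w') Ω := by
    intro w'
    rw [hGdef]
    exact (hg₀.add (ContDiffOn.sum fun n _ => (hg n).const_smul (w' n))).const_smul _
  have hmemn : Ω ∈ nhds θ₀ := hΩo.mem_nhds hmem
  have hGwtA : ContDiffAt ℝ 2 (G wt) θ₀ := (hGC2 wt).contDiffAt hmemn
  -- Γ
  set Γ : EuclideanSpace ℝ (Fin D) → EuclideanSpace ℝ (Fin D) :=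
    fun θ => G w θ - G (fun _ => 1) θ with hΓdef
  have hΓ2 : ContDiffOn ℝ 2 Γ Ω := (hGC2 w).sub (hGC2 _)
  have hΓA : ContDiffAt ℝ 2 Γ θ₀ := hΓ2.contDiffAt hmemn
  -- affine structure of G along the segment
  have haff : ∀ (t : ℝ) (θ : EuclideanSpace ℝ (Fin D)),
      G (wt + t • Δ) θ = G wt θ + t • Γ θ := by
    intro t θ
    simp only [hΓdef, hΔ]
    simp only [hGdef, Pi.add_apply, Pi.smul_apply, Pi.sub_apply, smul_eq_mul]
    have e : ∀ x : Fin N, (wt x + t * (w x - 1)) • g x θ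
        = wt x • g x θ + (t • (w x • g x θ) - t • g x θ) := by
      intro x; module
    rw [Finset.sum_congr rfl fun x _ => e x, Finset.sum_add_distrib,
      Finset.sum_sub_distrib, ← Finset.smul_sum, ← Finset.smul_sum]
    simp_rw [one_smul]
    module
  -- the path
  set c : ℝ → (Fin N → ℝ) := fun t => wt + t • Δ with hc
  have hc0 : c 0 = wt := by simp [hc]
  have hccont : Continuous c := by fun_prop
  have hcd : ∀ t : ℝ, HasDerivAt c Δ t := by
    intro t
    simpa [hc] using ((hasDerivAt_id t).smul_const Δ).const_add wt
  have hct : Filter.Tendsto c (nhds 0) (nhds wt) := by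
    rw [← hc0]; exact hccont.continuousAt.tendsto
  set Dfun : ℝ → EuclideanSpace ℝ (Fin D) := fun t => fderiv ℝ θhat (c t) Δ with hDfun
  -- eventual facts
  have hθev : ∀ᶠ t : ℝ in nhds 0, ContDiffAt ℝ 2 θhat (c t) :=
    hct.eventually (hθ.eventually (by norm_num))
  have hmemev : ∀ᶠ t : ℝ in nhds 0, θhat (c t) ∈ Ω := by
    have ht : Filter.Tendsto (fun t => θhat (c t)) (nhds 0) (nhds θ₀) := by
      exact (hθ.continuousAt.tendsto).comp hct
    exact ht.eventually_mem hmemn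
  -- derivative of the root equation along the path
  set R : ℝ → EuclideanSpace ℝ (Fin D) := fun t =>
    fderiv ℝ (G wt) (θhat (c t)) (Dfun t)
      + (t • (fderiv ℝ Γ (θhat (c t))) (Dfun t) + Γ (θhat (c t))) with hR
  have hqR : ∀ᶠ t : ℝ in nhds 0, HasDerivAt (fun s => G (c s) (θhat (c s))) (R t) t := by
    filter_upwards [hθev, hmemev] with t h2 hΩt
    have hhd : HasDerivAt (fun s => θhat (c s)) (Dfun t) t :=
      ((h2.differentiableAt (by norm_num)).hasFDerivAt).comp_hasDerivAt t (hcd t)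
    have hGd : DifferentiableAt ℝ (G wt) (θhat (c t)) :=
      (((hGC2 wt).contDiffAt (hΩo.mem_nhds hΩt))).differentiableAt (by norm_num)
    have h1 : HasDerivAt (fun s => G wt (θhat (c s)))
        (fderiv ℝ (G wt) (θhat (c t)) (Dfun t)) t :=
      (hGd.hasFDerivAt).comp_hasDerivAt t hhd
    have hΓd : DifferentiableAt ℝ Γ (θhat (c t)) :=
      (hΓ2.contDiffAt (hΩo.mem_nhds hΩt)).differentiableAt (by norm_num)
    have h2' : HasDerivAt (fun s => Γ (θhat (c s)))
        ((fderiv ℝ Γ (θhat (c t))) (Dfun t)) t :=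
      HasFDerivAt.comp_hasDerivAt (l := Γ) t hΓd.hasFDerivAt hhd
    have h3 : HasDerivAt (fun s => s • Γ (θhat (c s)))
        (t • (fderiv ℝ Γ (θhat (c t))) (Dfun t) + (1:ℝ) • Γ (θhat (c t))) t :=
      (hasDerivAt_id t).smul h2'
    have hsum := h1.add h3
    have hqeq : (fun s => G (c s) (θhat (c s)))
        = fun s => G wt (θhat (c s)) + s • Γ (θhat (c s)) :=
      funext fun s => haff s _
    rw [hqeq, hR]
    simp only [one_smul] at hsum
    exact hsum
  -- the derivative of the root equation vanishes near 0
  have hR0 : ∀ᶠ t : ℝ in nhds 0, R t = 0 := by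
    obtain ⟨V, hVsub, hVo, hVmem⟩ := mem_nhds_iff.mp hroot
    have hOpen : IsOpen (c ⁻¹' V) := hVo.preimage hccont
    have h0mem : (0:ℝ) ∈ c ⁻¹' V := by simp [Set.mem_preimage, hc0, hVmem]
    filter_upwards [hqR, hOpen.mem_nhds h0mem] with t ht htV
    have hev : (fun s => G (c s) (θhat (c s))) =ᶠ[nhds t]
        (fun _ => (0 : EuclideanSpace ℝ (Fin D))) := by
      filter_upwards [hOpen.mem_nhds htV] with s hs
      exact hVsub hs
    have h0 : HasDerivAt (fun _ : ℝ => (0 : EuclideanSpace ℝ (Fin D))) (R t) t :=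
      ht.congr_of_eventuallyEq hev.symm
    exact ((hasDerivAt_const t (0 : EuclideanSpace ℝ (Fin D))).unique h0).symm
  -- key derivative objects at 0
  set d : EuclideanSpace ℝ (Fin D) := fderiv ℝ θhat wt Δ with hd
  set X : EuclideanSpace ℝ (Fin D) :=
    fderiv ℝ (fun w' => fderiv ℝ θhat w' Δ) wt Δ with hX
  have hd0 : HasDerivAt (fun s => θhat (c s)) d 0 := by
    have hfd : HasFDerivAt θhat (fderiv ℝ θhat wt) (c 0) := by
      rw [hc0]; exact (hθ.differentiableAt (by norm_num)).hasFDerivAt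
    exact hfd.comp_hasDerivAt 0 (hcd 0)
  have hΦA : ContDiffAt ℝ 1 (fderiv ℝ θhat) wt := hθ.fderiv_right (by norm_num)
  have hφdiff : DifferentiableAt ℝ (fun w' => fderiv ℝ θhat w' Δ) wt :=
    (hΦA.differentiableAt (by norm_num)).clm_apply (differentiableAt_const Δ)
  have hXd : HasDerivAt Dfun X 0 := by
    have hfd : HasFDerivAt (fun w' => fderiv ℝ θhat w' Δ)
        (fderiv ℝ (fun w' => fderiv ℝ θhat w' Δ) wt) (c 0) := by
      rw [hc0]; exact hφdiff.hasFDerivAt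
    exact hfd.comp_hasDerivAt 0 (hcd 0)
  have hGwt' : DifferentiableAt ℝ (fderiv ℝ (G wt)) θ₀ :=
    (hGwtA.fderiv_right (m := 1) (by norm_num)).differentiableAt (by norm_num)
  set T₂ := fderiv ℝ (fderiv ℝ (G wt)) θ₀ with hT₂
  have hGfd : HasFDerivAt (fderiv ℝ (G wt)) T₂ (θhat (c 0)) := by
    rw [hc0]; exact hGwt'.hasFDerivAt
  have haD : HasDerivAt (fun t => fderiv ℝ (G wt) (θhat (c t))) (T₂ d) 0 :=
    hGfd.comp_hasDerivAt 0 hd0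
  have hA : HasDerivAt (fun t => fderiv ℝ (G wt) (θhat (c t)) (Dfun t))
      ((T₂ d) (Dfun 0) + (fderiv ℝ (G wt) (θhat (c 0))) X) 0 :=
    haD.clm_apply hXd
  have hΓ' : DifferentiableAt ℝ (fderiv ℝ Γ) θ₀ :=
    (hΓA.fderiv_right (m := 1) (by norm_num)).differentiableAt (by norm_num)
  have hΓfd : HasFDerivAt (fderiv ℝ Γ) (fderiv ℝ (fderiv ℝ Γ) θ₀) (θhat (c 0)) := by
    rw [hc0]; exact hΓ'.hasFDerivAt
  have hbD : HasDerivAt (fun t => fderiv ℝ Γ (θhat (c t)))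
      (fderiv ℝ (fderiv ℝ Γ) θ₀ d) 0 :=
    hΓfd.comp_hasDerivAt 0 hd0
  have hb2 : HasDerivAt (fun t => fderiv ℝ Γ (θhat (c t)) (Dfun t))
      ((fderiv ℝ (fderiv ℝ Γ) θ₀ d) (Dfun 0) + (fderiv ℝ Γ (θhat (c 0))) X) 0 :=
    hbD.clm_apply hXd
  have hb : HasDerivAt (fun t => t • (fderiv ℝ Γ (θhat (c t)) (Dfun t)))
      ((0:ℝ) • ((fderiv ℝ (fderiv ℝ Γ) θ₀ d) (Dfun 0) + (fderiv ℝ Γ (θhat (c 0))) X)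
        + (1:ℝ) • (fderiv ℝ Γ (θhat (c 0)) (Dfun 0))) 0 :=
    (hasDerivAt_id 0).smul hb2
  have hΓdiff0 : DifferentiableAt ℝ Γ θ₀ := hΓA.differentiableAt (by norm_num)
  have hΓfd0 : HasFDerivAt Γ (fderiv ℝ Γ θ₀) (θhat (c 0)) := by
    rw [hc0]; exact hΓdiff0.hasFDerivAt
  have hcc : HasDerivAt (fun t => Γ (θhat (c t))) (fderiv ℝ Γ θ₀ d) 0 :=
    HasFDerivAt.comp_hasDerivAt (l := Γ) 0 hΓfd0 hd0
  have hRd : HasDerivAt R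
      (((T₂ d) (Dfun 0) + (fderiv ℝ (G wt) (θhat (c 0))) X)
        + (((0:ℝ) • ((fderiv ℝ (fderiv ℝ Γ) θ₀ d) (Dfun 0) + (fderiv ℝ Γ (θhat (c 0))) X)
          + (1:ℝ) • (fderiv ℝ Γ (θhat (c 0)) (Dfun 0)))
          + fderiv ℝ Γ θ₀ d)) 0 :=
    hA.add (hb.add hcc)
  have hzero : HasDerivAt (fun _ : ℝ => (0 : EuclideanSpace ℝ (Fin D)))
      (((T₂ d) (Dfun 0) + (fderiv ℝ (G wt) (θhat (c 0))) X)
        + (((0:ℝ) • ((fderiv ℝ (fderiv ℝ Γ) θ₀ d) (Dfun 0) + (fderiv ℝ Γ (θhat (c 0))) X)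
          + (1:ℝ) • (fderiv ℝ Γ (θhat (c 0)) (Dfun 0)))
          + fderiv ℝ Γ θ₀ d)) 0 :=
    hRd.congr_of_eventuallyEq (hR0.mono fun t ht => ht.symm)
  have hS := ((hasDerivAt_const (0:ℝ) (0 : EuclideanSpace ℝ (Fin D))).unique hzero).symm
  have hD0 : Dfun 0 = d := by rw [hDfun]; simp only [hc0]; rfl
  have heq : (T₂ d) d + (fderiv ℝ (G wt) θ₀) X
      + (fderiv ℝ Γ θ₀ d + fderiv ℝ Γ θ₀ d) = 0 := by
    rw [hD0, hc0, ← hθ₀] at hS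
    rw [zero_smul, one_smul, zero_add] at hS
    exact hS
  have hx : (fderiv ℝ (G wt) θ₀) X
      = -((T₂ d) d + (fderiv ℝ Γ θ₀ d + fderiv ℝ Γ θ₀ d)) := by
    apply eq_neg_of_add_eq_zero_left
    rw [← heq]; abel
  have hXeq : X = B ((fderiv ℝ (G wt) θ₀) X) := by
    have h := DFunLike.congr_fun hB1 X
    simpa using h.symm
  -- norm bounds
  have hδ₁0 : 0 ≤ δ₁ := le_trans (Real.sqrt_nonneg _) hδ₁
  have h1 : ‖X‖ ≤ Ctop * ‖(T₂ d) d + (fderiv ℝ Γ θ₀ d + fderiv ℝ Γ θ₀ d)‖ := by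
    rw [hXeq, hx, map_neg, norm_neg]
    calc ‖B ((T₂ d) d + (fderiv ℝ Γ θ₀ d + fderiv ℝ Γ θ₀ d))‖
        ≤ ‖B‖ * ‖(T₂ d) d + (fderiv ℝ Γ θ₀ d + fderiv ℝ Γ θ₀ d)‖ := B.le_opNorm _
      _ ≤ Ctop * ‖(T₂ d) d + (fderiv ℝ Γ θ₀ d + fderiv ℝ Γ θ₀ d)‖ :=
          mul_le_mul_of_nonneg_right hBle (norm_nonneg _)
  have h2 : ‖(T₂ d) d + (fderiv ℝ Γ θ₀ d + fderiv ℝ Γ θ₀ d)‖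
      ≤ ‖(T₂ d) d‖ + 2 * ‖fderiv ℝ Γ θ₀ d‖ := by
    calc ‖(T₂ d) d + (fderiv ℝ Γ θ₀ d + fderiv ℝ Γ θ₀ d)‖
        ≤ ‖(T₂ d) d‖ + ‖fderiv ℝ Γ θ₀ d + fderiv ℝ Γ θ₀ d‖ := norm_add_le _ _
      _ ≤ ‖(T₂ d) d‖ + (‖fderiv ℝ Γ θ₀ d‖ + ‖fderiv ℝ Γ θ₀ d‖) := by
          gcongr; exact norm_add_le _ _
      _ = ‖(T₂ d) d‖ + 2 * ‖fderiv ℝ Γ θ₀ d‖ := by ring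
  -- frobenius bounds
  have hentry : ∀ (f : EuclideanSpace ℝ (Fin D) → EuclideanSpace ℝ (Fin D)),
      DifferentiableAt ℝ (fderiv ℝ f) θ₀ → ∀ (j l : Fin D),
      fderiv ℝ (fun θ' => fderiv ℝ f θ' (EuclideanSpace.single j (1:ℝ))) θ₀
          (EuclideanSpace.single l (1:ℝ))
        = (fderiv ℝ (fderiv ℝ f) θ₀ (EuclideanSpace.single l (1:ℝ)))
            (EuclideanSpace.single j (1:ℝ)) := by
    intro f hf j l
    rw [fderiv_clm_apply hf (differentiableAt_const _)]
    simp
  have hG1A : ContDiffAt ℝ 2 (G (fun _ => 1)) θ₀ := (hGC2 _).contDiffAt hmemn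
  have hG1' : DifferentiableAt ℝ (fderiv ℝ (G (fun _ => 1))) θ₀ :=
    (hG1A.fderiv_right (m := 1) (by norm_num)).differentiableAt (by norm_num)
  set U₂ := fderiv ℝ (fderiv ℝ (G (fun _ => 1))) θ₀ with hU₂
  have hM₂' : Real.sqrt (∑ i, ∑ j, ∑ l,
      ((U₂ (EuclideanSpace.single l (1:ℝ))) (EuclideanSpace.single j (1:ℝ)) i) ^ 2) ≤ M₂ := by
    simp only [hentry _ hG1', hU₂] at hM₂ ⊢
    exact hM₂
  have hδ₂' : Real.sqrt (∑ i, ∑ j, ∑ l,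
      (((T₂ (EuclideanSpace.single l (1:ℝ))) (EuclideanSpace.single j (1:ℝ)) i)
        - ((U₂ (EuclideanSpace.single l (1:ℝ))) (EuclideanSpace.single j (1:ℝ)) i)) ^ 2)
        ≤ δ₂ := by
    simp only [hentry _ hG1', hentry _ hGwt', hT₂, hU₂, PiLp.sub_apply] at hδ₂ ⊢
    exact hδ₂
  have hFwt : Real.sqrt (∑ i, ∑ j, ∑ l,
      ((T₂ (EuclideanSpace.single l (1:ℝ))) (EuclideanSpace.single j (1:ℝ)) i) ^ 2)
      ≤ δ₂ + M₂ :=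
    le_trans (tri3 _ (fun i j l => (U₂ (EuclideanSpace.single l (1:ℝ)))
      (EuclideanSpace.single j (1:ℝ)) i)) (add_le_add hδ₂' hM₂')
  have hT2b : ‖(T₂ d) d‖ ≤ (δ₂ + M₂) * (‖d‖ * ‖d‖) := by
    refine le_trans (bilin_apply_le_frob T₂ d d) ?_
    exact mul_le_mul_of_nonneg_right hFwt (by positivity)
  have hsub : fderiv ℝ Γ θ₀ = fderiv ℝ (G w) θ₀ - fderiv ℝ (G (fun _ => 1)) θ₀ := by
    rw [hΓdef]
    exact fderiv_sub (((hGC2 w).contDiffAt hmemn).differentiableAt (by norm_num))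
      (hG1A.differentiableAt (by norm_num))
  have hδ1b : ‖fderiv ℝ Γ θ₀ d‖ ≤ δ₁ * ‖d‖ := by
    rw [hsub]
    refine le_trans (clm_apply_le_frob _ d) ?_
    exact mul_le_mul_of_nonneg_right hδ₁ (norm_nonneg _)
  -- put everything together
  have hdle : ‖d‖ ≤ Ctop * δ₀ := hdθ
  have hkey : ‖X‖ ≤ Ctop * ((δ₂ + M₂) * (‖d‖ * ‖d‖) + 2 * (δ₁ * ‖d‖)) := by
    refine le_trans h1 (mul_le_mul_of_nonneg_left ?_ hC0)
    refine le_trans h2 ?_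
    have := mul_le_mul_of_nonneg_left hδ1b (by norm_num : (0:ℝ) ≤ 2)
    linarith [hT2b]
  have hd_nonneg : 0 ≤ ‖d‖ := norm_nonneg d
  have hCd0 : 0 ≤ Ctop * δ₀ := le_trans hd_nonneg hdle
  have hF0 : 0 ≤ δ₂ + M₂ := le_trans (Real.sqrt_nonneg _) hFwt
  have hdd : ‖d‖ * ‖d‖ ≤ (Ctop * δ₀) * (Ctop * δ₀) :=
    mul_le_mul hdle hdle hd_nonneg hCd0
  refine le_trans hkey ?_
  have step1 : (δ₂ + M₂) * (‖d‖ * ‖d‖) ≤ (δ₂ + M₂) * ((Ctop * δ₀) * (Ctop * δ₀)) :=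
    mul_le_mul_of_nonneg_left hdd hF0
  have step2 : 2 * (δ₁ * ‖d‖) ≤ 2 * (δ₁ * (Ctop * δ₀)) := by
    have := mul_le_mul_of_nonneg_left hdle hδ₁0
    linarith
  have step3 : Ctop * ((δ₂ + M₂) * (‖d‖ * ‖d‖) + 2 * (δ₁ * ‖d‖))
      ≤ Ctop * ((δ₂ + M₂) * ((Ctop * δ₀) * (Ctop * δ₀)) + 2 * (δ₁ * (Ctop * δ₀))) := by
    apply mul_le_mul_of_nonneg_left _ hC0
    linarith
  refine le_trans step3 (le_of_eq ?_)
  ring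
end
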